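/- arXiv:2106.05064 — 3 statements merged into one kernel-verified Lean document; each statement's English description precedes it below -/
import Mathlib

section
/- Let D be an inhabited algebraic dcpo and E a pointed bounded complete algebraic dcpo. Then the exponential E^D of Scott continuous functions is algebraic, and the set of suprema of bounded finite sets of single-step functions ⟨a ⇒ b⟩ with a compact in D and b compact in E forms a basis of compact elements for E^D. -/
open Classical

def IsDcpo (D : Type*) [PartialOrder D] : Prop :=
  ∀ S : Set D, S.Nonempty → DirectedOn (· ≤ ·) S → ∃ s, IsLUB S s

def WayBelow {D : Type*} [PartialOrder D] (x y : D) : Prop :=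
  ∀ S : Set D, S.Nonempty → DirectedOn (· ≤ ·) S →
    ∀ s, IsLUB S s → y ≤ s → ∃ a ∈ S, x ≤ a

def ScottOpen {D : Type*} [PartialOrder D] (U : Set D) : Prop :=
  IsUpperSet U ∧ ∀ S : Set D, S.Nonempty → DirectedOn (· ≤ ·) S →
    ∀ s, IsLUB S s → s ∈ U → ∃ a ∈ S, a ∈ U

def ScottClosed {D : Type*} [PartialOrder D] (C : Set D) : Prop :=
  IsLowerSet C ∧ ∀ S : Set D, S.Nonempty → DirectedOn (· ≤ ·) S →
    S ⊆ C → ∀ s, IsLUB S s → s ∈ C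

def IsBasis {D : Type*} [PartialOrder D] (B : Set D) : Prop :=
  ∀ x : D, (B ∩ {y | WayBelow y x}).Nonempty ∧
    DirectedOn (· ≤ ·) (B ∩ {y | WayBelow y x}) ∧
    IsLUB (B ∩ {y | WayBelow y x}) x

def DcpoContinuous (D : Type*) [PartialOrder D] : Prop :=
  ∀ x : D, ({y | WayBelow y x} : Set D).Nonempty ∧
    DirectedOn (· ≤ ·) ({y | WayBelow y x} : Set D) ∧
    IsLUB ({y | WayBelow y x} : Set D) x

def DcpoAlgebraic (D : Type*) [PartialOrder D] : Prop :=
  ∀ x : D, ({c | WayBelow c c ∧ c ≤ x} : Set D).Nonempty ∧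
    DirectedOn (· ≤ ·) ({c | WayBelow c c ∧ c ≤ x} : Set D) ∧
    IsLUB ({c | WayBelow c c ∧ c ≤ x} : Set D) x

def HausdorffSep {D : Type*} [PartialOrder D] (x y : D) : Prop :=
  ∃ U V : Set D, ScottOpen U ∧ ScottOpen V ∧ x ∈ U ∧ y ∈ V ∧ U ∩ V = ∅

def StronglyMaximal {D : Type*} [PartialOrder D] (x : D) : Prop :=
  ∀ u v : D, WayBelow u v → WayBelow u x ∨ HausdorffSep v x

def Sharp {D : Type*} [PartialOrder D] (x : D) : Prop :=
  ∀ y z : D, WayBelow y z → WayBelow y x ∨ ∃ U : Set D, ScottOpen U ∧ z ∈ U ∧ x ∉ U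

noncomputable def step {D E : Type*} [PartialOrder D] [PartialOrder E] [OrderBot E]
    (x : D) (y : E) : D → E :=
  fun d => if x ≤ d then y else ⊥

set_option linter.unusedSectionVars false

section MyAux

variable {α : Type*} [PartialOrder α]

theorem myWbLe {x y : α} (h : WayBelow x y) : x ≤ y := by
  obtain ⟨a, ha, hxa⟩ := h {y} ⟨y, rfl⟩
    (directedOn_singleton y) y isLUB_singleton le_rfl
  rw [Set.mem_singleton_iff] at ha
  exact ha ▸ hxa

theorem myWbOfLe {c x : α} (hc : WayBelow c c) (hle : c ≤ x) : WayBelow c x :=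
  fun S hne hdir s hs hxs => hc S hne hdir s hs (hle.trans hxs)

theorem myDirImage {β : Type*} [PartialOrder β] {S : Set α} (hS : DirectedOn (· ≤ ·) S)
    {f : α → β} (hf : Monotone f) : DirectedOn (· ≤ ·) (f '' S) := by
  rintro _ ⟨a, ha, rfl⟩ _ ⟨b, hb, rfl⟩
  obtain ⟨c, hc, hac, hbc⟩ := hS a ha b hb
  exact ⟨f c, ⟨c, hc, rfl⟩, hf hac, hf hbc⟩

theorem myDirFinset {ι : Type*} {S : Set α} (hS : DirectedOn (· ≤ ·) S) (hne : S.Nonempty)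
    (F : Finset ι) (P : ι → α → Prop) (hP : ∀ i a a', P i a → a ≤ a' → P i a')
    (h : ∀ i ∈ F, ∃ g ∈ S, P i g) : ∃ g ∈ S, ∀ i ∈ F, P i g := by
  classical
  induction F using Finset.induction with
  | empty => exact ⟨hne.choose, hne.choose_spec, fun i hi => absurd hi (Finset.notMem_empty i)⟩
  | @insert a s ha ih =>
    obtain ⟨g1, hg1S, hg1⟩ := ih (fun i hi => h i (Finset.mem_insert_of_mem hi))
    obtain ⟨g2, hg2S, hg2⟩ := h a (Finset.mem_insert_self a s)
    obtain ⟨g, hgS, h1, h2⟩ := hS g1 hg1S g2 hg2S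
    refine ⟨g, hgS, fun i hi => ?_⟩
    rcases Finset.mem_insert.mp hi with rfl | hi
    · exact hP i g2 g hg2 h2
    · exact hP i g1 g (hg1 i hi) h1

end MyAux

section FunAux

variable {D E : Type*} [PartialOrder D] [PartialOrder E] [OrderBot E]

theorem myFle {f g : {f : D → E // ScottContinuous f}} (h : f ≤ g) (d : D) : f.1 d ≤ g.1 d := h d

theorem myFle' {f g : {f : D → E // ScottContinuous f}} (h : ∀ d, f.1 d ≤ g.1 d) : f ≤ g := h

theorem myEvalMono (d : D) : Monotone (fun f : {f : D → E // ScottContinuous f} => f.1 d) :=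
  fun _ _ h => myFle h d

theorem myBotCont : ScottContinuous (fun _ : D => (⊥ : E)) := by
  intro T hne _ s _
  constructor
  · rintro _ ⟨t, ht, rfl⟩; exact le_rfl
  · intro v hv; obtain ⟨t, ht⟩ := hne; exact hv ⟨t, ht, rfl⟩

theorem myStepMono {a : D} {b : E} : Monotone (step a b) := by
  intro d d' h
  unfold step
  by_cases hd : a ≤ d
  · rw [if_pos hd, if_pos (hd.trans h)]
  · rw [if_neg hd]; exact bot_le

theorem myStepCont {a : D} {b : E} (ha : WayBelow a a) : ScottContinuous (step a b) := by
  intro T hTne hTdir s hs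
  by_cases hle : a ≤ s
  · have hsb : step a b s = b := if_pos hle
    rw [hsb]
    constructor
    · rintro _ ⟨t, ht, rfl⟩
      unfold step; split
      · exact le_rfl
      · exact bot_le
    · intro v hv
      obtain ⟨t, ht, hat⟩ := ha T hTne hTdir s hs hle
      have hb : step a b t = b := if_pos hat
      exact hb ▸ hv ⟨t, ht, rfl⟩
  · have hall : ∀ t ∈ T, step a b t = ⊥ := fun t ht => if_neg (fun h => hle (h.trans (hs.1 ht)))
    have hss : step a b s = ⊥ := if_neg hle
    rw [hss]
    constructor
    · rintro _ ⟨t, ht, rfl⟩; rw [hall t ht]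
    · intro v hv
      obtain ⟨t, ht⟩ := hTne
      have h2 := hv ⟨t, ht, rfl⟩
      rwa [hall t ht] at h2

theorem myStepLe {a : D} {b : E} {f : D → E} (hf : Monotone f) :
    (∀ d, step a b d ≤ f d) ↔ b ≤ f a := by
  constructor
  · intro h
    have := h a
    rwa [step, if_pos le_rfl] at this
  · intro h d
    unfold step; split
    · next hd => exact h.trans (hf hd)
    · exact bot_le

theorem myFunBC (hEbc : ∀ S : Set E, (∃ u : E, ∀ s ∈ S, s ≤ u) → ∃ l : E, IsLUB S l)
    (S : Set {f : D → E // ScottContinuous f}) (u : {f : D → E // ScottContinuous f})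
    (hu : ∀ f ∈ S, ∀ d, f.1 d ≤ u.1 d) :
    ∃ g : {f : D → E // ScottContinuous f}, IsLUB S g ∧
      ∀ d, IsLUB ((fun f : {f : D → E // ScottContinuous f} => f.1 d) '' S) (g.1 d) := by
  have hlub : ∀ d : D, ∃ l, IsLUB ((fun f : {f : D → E // ScottContinuous f} => f.1 d) '' S) l :=
    fun d => hEbc _ ⟨u.1 d, by rintro _ ⟨f, hf, rfl⟩; exact hu f hf d⟩
  choose m hm using hlub
  have hub : ∀ d, ∀ f ∈ S, f.1 d ≤ m d := fun d f hf => (hm d).1 ⟨f, hf, rfl⟩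
  have hmono : Monotone m := by
    intro d d' hdd'
    exact (hm d).2 (by rintro _ ⟨f, hf, rfl⟩; exact ((f.2.monotone) hdd').trans (hub d' f hf))
  have hcont : ScottContinuous m := by
    intro T hTne hTdir s hs
    constructor
    · rintro _ ⟨t, ht, rfl⟩; exact hmono (hs.1 ht)
    · intro v hv
      refine (hm s).2 ?_
      rintro _ ⟨f, hf, rfl⟩
      refine (f.2 hTne hTdir hs).2 ?_
      rintro _ ⟨t, ht, rfl⟩
      exact (hub t f hf).trans (hv ⟨t, ht, rfl⟩)
  refine ⟨⟨m, hcont⟩, ⟨?_, ?_⟩, hm⟩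
  · intro f hf
    exact myFle' (fun d => hub d f hf)
  · intro v hv
    refine myFle' (fun d => ?_)
    exact (hm d).2 (by rintro _ ⟨f, hf, rfl⟩; exact myFle (hv hf) d)

theorem myIsLUBApply (hEbc : ∀ S : Set E, (∃ u : E, ∀ s ∈ S, s ≤ u) → ∃ l : E, IsLUB S l)
    {S : Set {f : D → E // ScottContinuous f}} {s : {f : D → E // ScottContinuous f}}
    (h : IsLUB S s) (d : D) :
    IsLUB ((fun f : {f : D → E // ScottContinuous f} => f.1 d) '' S) (s.1 d) := by
  obtain ⟨g, hg, hgd⟩ := myFunBC hEbc S s (fun f hf d => myFle (h.1 hf) d)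
  have he : g = s := hg.unique h
  exact he ▸ hgd d

theorem myStepWb (hEbc : ∀ S : Set E, (∃ u : E, ∀ s ∈ S, s ≤ u) → ∃ l : E, IsLUB S l)
    {a : D} {b : E} (ha : WayBelow a a) (hb : WayBelow b b) :
    WayBelow (⟨step a b, myStepCont ha⟩ : {f : D → E // ScottContinuous f})
      ⟨step a b, myStepCont ha⟩ := by
  intro S hne hdir s hs hles
  have hpt := myIsLUBApply hEbc hs a
  have hba : b ≤ s.1 a := by
    have h2 := myFle hles a
    simp only [step] at h2
    rwa [if_pos (le_refl a)] at h2
  obtain ⟨_, ⟨f, hf, rfl⟩, hbf⟩ :=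
    hb _ (hne.image _) (myDirImage hdir (myEvalMono a)) _ hpt hba
  exact ⟨f, hf, myFle' ((myStepLe f.2.monotone).mpr hbf)⟩

end FunAux

theorem stmt14 {D E : Type*} [PartialOrder D] [PartialOrder E] [OrderBot E]
    (hD : IsDcpo D) (hDne : Nonempty D) (hDalg : DcpoAlgebraic D)
    (hE : IsDcpo E)
    (hEbc : ∀ S : Set E, (∃ u : E, ∀ s ∈ S, s ≤ u) → ∃ l : E, IsLUB S l)
    (hEalg : DcpoAlgebraic E) :
    DcpoAlgebraic {f : D → E // ScottContinuous f} ∧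
    (∀ g ∈ ({g : {f : D → E // ScottContinuous f} | ∃ F : Finset (D × E),
        (∀ p ∈ F, WayBelow p.1 p.1 ∧ WayBelow p.2 p.2) ∧
        (∃ u : {f : D → E // ScottContinuous f}, ∀ p ∈ F, ∀ d : D, step p.1 p.2 d ≤ u.1 d) ∧
        IsLUB {h : {f : D → E // ScottContinuous f} |
          ∃ p ∈ F, (h : D → E) = step p.1 p.2} g}), WayBelow g g) ∧
    IsBasis ({g : {f : D → E // ScottContinuous f} | ∃ F : Finset (D × E),
        (∀ p ∈ F, WayBelow p.1 p.1 ∧ WayBelow p.2 p.2) ∧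
        (∃ u : {f : D → E // ScottContinuous f}, ∀ p ∈ F, ∀ d : D, step p.1 p.2 d ≤ u.1 d) ∧
        IsLUB {h : {f : D → E // ScottContinuous f} |
          ∃ p ∈ F, (h : D → E) = step p.1 p.2} g}) := by
  classical
  set B : Set {f : D → E // ScottContinuous f} := {g : {f : D → E // ScottContinuous f} | ∃ F : Finset (D × E),
      (∀ p ∈ F, WayBelow p.1 p.1 ∧ WayBelow p.2 p.2) ∧
      (∃ u : {f : D → E // ScottContinuous f}, ∀ p ∈ F, ∀ d : D, step p.1 p.2 d ≤ u.1 d) ∧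
      IsLUB {h : {f : D → E // ScottContinuous f} |
        ∃ p ∈ F, (h : D → E) = step p.1 p.2} g} with hBdef
  let botF : {f : D → E // ScottContinuous f} := ⟨fun _ => ⊥, myBotCont⟩
  have hbotB : botF ∈ B := by
    refine ⟨∅, fun p hp => absurd hp (Finset.notMem_empty p),
      ⟨botF, fun p hp => absurd hp (Finset.notMem_empty p)⟩, ?_, ?_⟩
    · rintro h ⟨p, hp, _⟩
      exact absurd hp (Finset.notMem_empty p)
    · intro v _
      exact myFle' (fun d => bot_le)
  have hbotwb : ∀ x : {f : D → E // ScottContinuous f}, WayBelow botF x := by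
    intro x S hne hdir s hs hxs
    obtain ⟨a, ha⟩ := hne
    exact ⟨a, ha, myFle' (fun d => bot_le)⟩
  have hBwb : ∀ g ∈ B, WayBelow g g := by
    rintro g ⟨F, hF, ⟨u, hu⟩, hlubF⟩
    intro S hne hdir s hs hgs
    have hstep : ∀ p ∈ F, ∃ f ∈ S, ∀ d, step p.1 p.2 d ≤ f.1 d := by
      intro p hp
      have hc := myStepCont (E := E) (b := p.2) (hF p hp).1
      have hmem : (⟨step p.1 p.2, hc⟩ : {f : D → E // ScottContinuous f}) ∈
          {h : {f : D → E // ScottContinuous f} | ∃ q ∈ F, (h : D → E) = step q.1 q.2} :=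
        ⟨p, hp, rfl⟩
      have hle : (⟨step p.1 p.2, hc⟩ : {f : D → E // ScottContinuous f}) ≤ s :=
        (hlubF.1 hmem).trans hgs
      obtain ⟨f, hf, hsf⟩ := myStepWb hEbc (hF p hp).1 (hF p hp).2 S hne hdir s hs hle
      exact ⟨f, hf, fun d => myFle hsf d⟩
    obtain ⟨f, hfS, hf⟩ := myDirFinset hdir hne F
      (fun p g => ∀ d, step p.1 p.2 d ≤ g.1 d)
      (fun p a a' hpa haa' d => (hpa d).trans (myFle haa' d)) hstep
    refine ⟨f, hfS, hlubF.2 ?_⟩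
    rintro h ⟨p, hp, he⟩
    refine myFle' (fun d => ?_)
    calc h.1 d = step p.1 p.2 d := by rw [show (h : D → E) = step p.1 p.2 from he]
    _ ≤ f.1 d := hf p hp d
  have hne : ∀ x, (B ∩ {y | WayBelow y x}).Nonempty := fun x => ⟨botF, hbotB, hbotwb x⟩
  have hdirB : ∀ x, DirectedOn (· ≤ ·) (B ∩ {y | WayBelow y x}) := by
    rintro x g1 ⟨⟨F1, hF1, hu1, hl1⟩, hw1⟩ g2 ⟨⟨F2, hF2, hu2, hl2⟩, hw2⟩
    have hTx : ∀ h ∈ {h : {f : D → E // ScottContinuous f} |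
        ∃ p ∈ F1 ∪ F2, (h : D → E) = step p.1 p.2}, ∀ d, h.1 d ≤ x.1 d := by
      rintro h ⟨p, hp, he⟩ d
      rcases Finset.mem_union.mp hp with hp1 | hp2
      · exact myFle ((hl1.1 ⟨p, hp1, he⟩).trans (myWbLe hw1)) d
      · exact myFle ((hl2.1 ⟨p, hp2, he⟩).trans (myWbLe hw2)) d
    obtain ⟨g, hg, _⟩ := myFunBC hEbc _ x hTx
    have hgB : g ∈ B := by
      refine ⟨F1 ∪ F2, ?_, ⟨x, ?_⟩, hg⟩
      · intro p hp
        rcases Finset.mem_union.mp hp with h | h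
        · exact hF1 p h
        · exact hF2 p h
      · intro p hp d
        have hp1 : WayBelow p.1 p.1 := by
          rcases Finset.mem_union.mp hp with h | h
          · exact (hF1 p h).1
          · exact (hF2 p h).1
        exact hTx ⟨step p.1 p.2, myStepCont hp1⟩ ⟨p, hp, rfl⟩ d
    have hgle1 : g1 ≤ g := hl1.2 (by
      rintro h ⟨p, hp, he⟩
      exact hg.1 ⟨p, Finset.mem_union_left _ hp, he⟩)
    have hgle2 : g2 ≤ g := hl2.2 (by
      rintro h ⟨p, hp, he⟩
      exact hg.1 ⟨p, Finset.mem_union_right _ hp, he⟩)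
    have hgx : g ≤ x := hg.2 (fun h hh => myFle' (hTx h hh))
    exact ⟨g, ⟨hgB, myWbOfLe (hBwb g hgB) hgx⟩, hgle1, hgle2⟩
  have hlubB : ∀ x, IsLUB (B ∩ {y | WayBelow y x}) x := by
    intro x
    constructor
    · exact fun g hg => myWbLe hg.2
    · intro v hv
      refine myFle' (fun d => ?_)
      refine (hEalg (x.1 d)).2.2.2 ?_
      rintro b ⟨hb, hbx⟩
      obtain ⟨hKne, hKdir, hKlub⟩ := hDalg d
      have himg := x.2 hKne hKdir hKlub
      obtain ⟨_, ⟨a, ⟨hawb, had⟩, rfl⟩, hba⟩ :=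
        hb _ (hKne.image _) (myDirImage hKdir x.2.monotone) _ himg hbx
      have hsabx : (⟨step a b, myStepCont hawb⟩ : {f : D → E // ScottContinuous f}) ≤ x :=
        myFle' ((myStepLe x.2.monotone).mpr hba)
      have hsabB : (⟨step a b, myStepCont hawb⟩ : {f : D → E // ScottContinuous f}) ∈ B := by
        refine ⟨{(a, b)}, ?_, ⟨x, ?_⟩, ?_, ?_⟩
        · intro p hp
          rw [Finset.mem_singleton] at hp
          subst hp
          exact ⟨hawb, hb⟩
        · intro p hp d'
          rw [Finset.mem_singleton] at hp
          subst hp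
          exact (myStepLe x.2.monotone).mpr hba d'
        · rintro h ⟨p, hp, he⟩
          rw [Finset.mem_singleton] at hp
          subst hp
          exact le_of_eq (Subtype.ext he)
        · intro w hw
          exact hw ⟨(a, b), Finset.mem_singleton_self _, rfl⟩
      have hsabv : (⟨step a b, myStepCont hawb⟩ : {f : D → E // ScottContinuous f}) ≤ v :=
        hv ⟨hsabB, myWbOfLe (myStepWb hEbc hawb hb) hsabx⟩
      have hstep2 : b ≤ v.1 a :=
        (myStepLe v.2.monotone).mp (fun d' => myFle hsabv d')
      exact hstep2.trans (v.2.monotone had)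
  refine ⟨?_, fun g hg => hBwb g hg, fun x => ⟨hne x, hdirB x, hlubB x⟩⟩
  intro x
  refine ⟨⟨botF, hbotwb botF, myFle' (fun d => bot_le)⟩, ?_, ?_, ?_⟩
  · rintro c1 ⟨h1w, h1le⟩ c2 ⟨h2w, h2le⟩
    obtain ⟨g1, hg1, hc1⟩ := (myWbOfLe h1w h1le) _ (hne x) (hdirB x) x (hlubB x) le_rfl
    obtain ⟨g2, hg2, hc2⟩ := (myWbOfLe h2w h2le) _ (hne x) (hdirB x) x (hlubB x) le_rfl
    obtain ⟨g, hgmem, hgg1, hgg2⟩ := hdirB x g1 hg1 g2 hg2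
    exact ⟨g, ⟨hBwb g hgmem.1, myWbLe hgmem.2⟩, hc1.trans hgg1, hc2.trans hgg2⟩
  · exact fun c hc => hc.2
  · intro v hv
    exact (hlubB x).2 (fun g hg => hv ⟨hBwb g hg.1, myWbLe hg.2⟩)
end

section
/- Two elements x and y of a continuous dcpo D are Hausdorff separated (there exist disjoint Scott open sets U ∋ x and V ∋ y) if and only if there exist a, b ∈ D with a ≪ x, b ≪ y and no z ∈ D satisfies both a ≪ z and b ≪ z. -/
open Classical

lemma wb_le {D : Type*} [PartialOrder D] (hc : DcpoContinuous D) {a x : D}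
    (h : WayBelow a x) : a ≤ x :=
  (hc x).2.2.1 h

lemma wb_left {D : Type*} [PartialOrder D] {a b x : D} (hab : a ≤ b)
    (h : WayBelow b x) : WayBelow a x := by
  intro S hS hdir s hs hxs
  obtain ⟨c, hc, hbc⟩ := h S hS hdir s hs hxs
  exact ⟨c, hc, hab.trans hbc⟩

lemma wb_right {D : Type*} [PartialOrder D] {a x y : D} (h : WayBelow a x)
    (hxy : x ≤ y) : WayBelow a y := by
  intro S hS hdir s hs hys
  exact h S hS hdir s hs (hxy.trans hys)

lemma interpolation {D : Type*} [PartialOrder D] (hc : DcpoContinuous D)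
    {a s : D} (h : WayBelow a s) : ∃ w, WayBelow a w ∧ WayBelow w s := by
  set T : Set D := {u | ∃ w, WayBelow u w ∧ WayBelow w s} with hT
  obtain ⟨⟨w0, hw0⟩, hdirs, hlubs⟩ := hc s
  obtain ⟨⟨u0, hu0⟩, _, _⟩ := hc w0
  have hTne : T.Nonempty := ⟨u0, w0, hu0, hw0⟩
  have hTdir : DirectedOn (· ≤ ·) T := by
    rintro u1 ⟨w1, hu1, hw1⟩ u2 ⟨w2, hu2, hw2⟩
    obtain ⟨w3, hw3, h13, h23⟩ := hdirs w1 hw1 w2 hw2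
    obtain ⟨_, hdirw3, _⟩ := hc w3
    obtain ⟨u3, hu3, h13', h23'⟩ := hdirw3 u1 (wb_right hu1 h13) u2 (wb_right hu2 h23)
    exact ⟨u3, ⟨w3, hu3, hw3⟩, h13', h23'⟩
  have hTlub : IsLUB T s := by
    constructor
    · rintro u ⟨w, hu, hw⟩
      exact (wb_le hc hu).trans (wb_le hc hw)
    · intro t ht
      apply hlubs.2
      rintro w hw
      obtain ⟨_, _, hlubw⟩ := hc w
      apply hlubw.2
      intro u hu
      exact ht ⟨w, hu, hw⟩
  obtain ⟨u, ⟨w, huw, hws⟩, hau⟩ := h T hTne hTdir s hTlub le_rfl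
  exact ⟨w, wb_left hau huw, hws⟩

lemma wb_open {D : Type*} [PartialOrder D] (hc : DcpoContinuous D) (a : D) :
    ScottOpen {z | WayBelow a z} := by
  constructor
  · intro z z' hzz' hz
    exact wb_right hz hzz'
  · intro S hS hdir s hs hmem
    obtain ⟨w, haw, hws⟩ := interpolation hc hmem
    obtain ⟨c, hcS, hwc⟩ := hws S hS hdir s hs le_rfl
    exact ⟨c, hcS, wb_right haw hwc⟩

theorem stmt15 {D : Type*} [PartialOrder D] (hD : IsDcpo D)
    (hc : DcpoContinuous D) (x y : D) :
    HausdorffSep x y ↔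
      ∃ a b : D, WayBelow a x ∧ WayBelow b y ∧
        ¬ ∃ z : D, WayBelow a z ∧ WayBelow b z := by
  constructor
  · rintro ⟨U, V, hU, hV, hxU, hyV, hUV⟩
    obtain ⟨hne, hdir, hlub⟩ := hc x
    obtain ⟨a, hax, haU⟩ := hU.2 _ hne hdir x hlub hxU
    obtain ⟨hne', hdir', hlub'⟩ := hc y
    obtain ⟨b, hby, hbV⟩ := hV.2 _ hne' hdir' y hlub' hyV
    refine ⟨a, b, hax, hby, ?_⟩
    rintro ⟨z, haz, hbz⟩
    have hzU : z ∈ U := hU.1 (wb_le hc haz) haU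
    have hzV : z ∈ V := hV.1 (wb_le hc hbz) hbV
    exact absurd (Set.mem_inter hzU hzV) (by simp [hUV])
  · rintro ⟨a, b, hax, hby, hno⟩
    refine ⟨{z | WayBelow a z}, {z | WayBelow b z}, wb_open hc a, wb_open hc b,
      hax, hby, ?_⟩
    ext z
    simp only [Set.mem_inter_iff, Set.mem_setOf_eq, Set.mem_empty_iff_false, iff_false]
    rintro ⟨h1, h2⟩
    exact hno ⟨z, h1, h2⟩
end

section
/- If x and y are strongly maximal elements of a continuous dcpo D and there exists a Scott open set containing x but not y (or vice versa), then x and y are Hausdorff separated, i.e. there exist disjoint Scott open sets U and V with x ∈ U and y ∈ V. -/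
open Classical

lemma wayBelow_le {D : Type*} [PartialOrder D] {u v : D} (h : WayBelow u v) : u ≤ v := by
  obtain ⟨a, ha, hua⟩ := h {v} ⟨v, rfl⟩
    (fun a ha b hb => ⟨v, rfl, ha.le, hb.le⟩) v isLUB_singleton le_rfl
  exact hua.trans ha.le

lemma hsep_symm {D : Type*} [PartialOrder D] {a b : D} (h : HausdorffSep a b) :
    HausdorffSep b a := by
  obtain ⟨U, V, hU, hV, haU, hbV, hUV⟩ := h
  exact ⟨V, U, hV, hU, hbV, haU, by rw [Set.inter_comm]; exact hUV⟩

lemma key {D : Type*} [PartialOrder D] (hc : DcpoContinuous D) {x y : D}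
    (hy : StronglyMaximal y) (U : Set D) (hU : ScottOpen U) (hxU : x ∈ U) (hyU : y ∉ U) :
    HausdorffSep x y := by
  obtain ⟨hne, hdir, hlub⟩ := hc x
  obtain ⟨u, huS, huU⟩ := hU.2 _ hne hdir x hlub hxU
  rcases hy u x huS with hu | hsep
  · exact absurd (hU.1 (wayBelow_le hu) huU) hyU
  · exact hsep

theorem stmt17 {D : Type*} [PartialOrder D] (hD : IsDcpo D)
    (hc : DcpoContinuous D) (x y : D)
    (hx : StronglyMaximal x) (hy : StronglyMaximal y)
    (h : (∃ U : Set D, ScottOpen U ∧ x ∈ U ∧ y ∉ U) ∨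
         (∃ U : Set D, ScottOpen U ∧ y ∈ U ∧ x ∉ U)) :
    HausdorffSep x y := by
  rcases h with ⟨U, hU, hxU, hyU⟩ | ⟨U, hU, hyU, hxU⟩
  · exact key hc hy U hU hxU hyU
  · exact hsep_symm (key hc hx U hU hyU hxU)
end
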